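/- Let C be a preadditive category with binary biproducts, B an abelian category, and F : C → B a quadratic functor. For objects X, Y of C, let i₁, i₂, p₁, p₂ be the biproduct inclusions and projections of X ⊕ Y, and let F(X|Y) be the image in B of the endomorphism [i₁p₁, i₂p₂] := F(i₁p₁ + i₂p₂) − F(i₁p₁) − F(i₂p₂) of F(X ⊕ Y). Then there is an isomorphism F(X) ⊕ F(X|Y) ⊕ F(Y) ≅ F(X ⊕ Y). -/

import Mathlib

open CategoryTheory CategoryTheory.Limits

/-- A functor between preadditive categories is quadratic if the deviation
`[f,g] := F(f+g) − F(f) − F(g)` is biadditive in `f` and `g` (by symmetry of the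
deviation it suffices to require additivity in the first variable). -/
def IsQuadraticFunctor {C : Type*} [Category C] [Preadditive C]
    {D : Type*} [Category D] [Preadditive D] (F : C ⥤ D) : Prop :=
  ∀ ⦃X Y : C⦄ (f g h : X ⟶ Y),
    F.map (f + g + h) - F.map (f + g) - F.map h =
      (F.map (f + h) - F.map f - F.map h) + (F.map (g + h) - F.map g - F.map h)

/-- The endomorphism `[i₁p₁, i₂p₂] = F(i₁p₁ + i₂p₂) − F(i₁p₁) − F(i₂p₂)` of `F(X ⊕ Y)`,
whose image is the quadratic crossed effect `F(X|Y)`. -/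
noncomputable def crossedDeviation {C : Type*} [Category C] [Preadditive C] [HasBinaryBiproducts C]
    {D : Type*} [Category D] [Preadditive D] (F : C ⥤ D) (X Y : C) :
    F.obj (X ⊞ Y) ⟶ F.obj (X ⊞ Y) :=
  F.map (biprod.fst ≫ biprod.inl + biprod.snd ≫ biprod.inr)
    - F.map (biprod.fst ≫ biprod.inl) - F.map (biprod.snd ≫ biprod.inr)

/-- A quadratic functor maps zero morphisms to zero. -/
lemma IsQuadraticFunctor.map_zero {C : Type*} [Category C] [Preadditive C]
    {D : Type*} [Category D] [Preadditive D] {F : C ⥤ D} (hF : IsQuadraticFunctor F)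
    (X Y : C) : F.map (0 : X ⟶ Y) = 0 := by
  have := hF (0 : X ⟶ Y) 0 0
  simp only [add_zero] at this
  -- this : F.map 0 - F.map 0 - F.map 0 = (F.map 0 - F.map 0 - F.map 0) + (F.map 0 - F.map 0 - F.map 0)
  have h : -F.map (0 : X ⟶ Y) = -F.map (0 : X ⟶ Y) + -F.map (0 : X ⟶ Y) := by
    simpa [sub_sub, sub_eq_add_neg] using this
  exact neg_eq_zero.mp (left_eq_add.mp h)

/-- For a quadratic functor `F` from a preadditive category with binary biproducts to an
abelian category, `F(X) ⊕ F(X|Y) ⊕ F(Y) ≅ F(X ⊕ Y)`, where the quadratic crossed effect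
`F(X|Y)` is the image of the endomorphism `[i₁p₁, i₂p₂]` of `F(X ⊕ Y)`. -/
theorem stmt_5 {C : Type*} [Category C] [Preadditive C] [HasBinaryBiproducts C]
    {B : Type*} [Category B] [Abelian B]
    (F : C ⥤ B) (hF : IsQuadraticFunctor F) (X Y : C) :
    Nonempty (F.obj X ⊞ (image (crossedDeviation F X Y) ⊞ F.obj Y) ≅ F.obj (X ⊞ Y)) := by
  set H : F.obj (X ⊞ Y) ⟶ F.obj (X ⊞ Y) := crossedDeviation F X Y with hHdef
  set e₁ : F.obj (X ⊞ Y) ⟶ F.obj (X ⊞ Y) :=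
    F.map (biprod.fst ≫ biprod.inl) with he₁
  set e₂ : F.obj (X ⊞ Y) ⟶ F.obj (X ⊞ Y) :=
    F.map (biprod.snd ≫ biprod.inr) with he₂
  have hH : H = 𝟙 _ - e₁ - e₂ := by
    rw [hHdef, crossedDeviation, biprod.total, F.map_id, he₁, he₂]
  set ι : image H ⟶ F.obj (X ⊞ Y) := image.ι H with hι
  set π : F.obj (X ⊞ Y) ⟶ image H := factorThruImage H with hπ
  have fac : π ≫ ι = H := image.fac H
  -- basic composites
  have inl_e₁ : F.map biprod.inl ≫ e₁ = F.map biprod.inl := by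
    rw [he₁, ← F.map_comp, biprod.inl_fst_assoc]
  have inl_e₂ : F.map biprod.inl ≫ e₂ = 0 := by
    rw [he₂, ← F.map_comp, biprod.inl_snd_assoc, zero_comp, hF.map_zero]
  have inr_e₁ : F.map biprod.inr ≫ e₁ = 0 := by
    rw [he₁, ← F.map_comp, biprod.inr_fst_assoc, zero_comp, hF.map_zero]
  have inr_e₂ : F.map biprod.inr ≫ e₂ = F.map biprod.inr := by
    rw [he₂, ← F.map_comp, biprod.inr_snd_assoc]
  have e₁_fst : e₁ ≫ F.map biprod.fst = F.map biprod.fst := by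
    rw [he₁, ← F.map_comp, Category.assoc, biprod.inl_fst, Category.comp_id]
  have e₂_fst : e₂ ≫ F.map biprod.fst = 0 := by
    rw [he₂, ← F.map_comp, Category.assoc, biprod.inr_fst, Limits.comp_zero, hF.map_zero]
  have e₁_snd : e₁ ≫ F.map biprod.snd = 0 := by
    rw [he₁, ← F.map_comp, Category.assoc, biprod.inl_snd, Limits.comp_zero, hF.map_zero]
  have e₂_snd : e₂ ≫ F.map biprod.snd = F.map biprod.snd := by
    rw [he₂, ← F.map_comp, Category.assoc, biprod.inr_snd, Category.comp_id]
  -- H kills inclusions and projections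
  have inl_H : F.map biprod.inl ≫ H = 0 := by
    rw [hH]
    simp [Preadditive.comp_sub, inl_e₁, inl_e₂]
  have inr_H : F.map biprod.inr ≫ H = 0 := by
    rw [hH]
    simp [Preadditive.comp_sub, inr_e₁, inr_e₂]
  have H_fst : H ≫ F.map biprod.fst = 0 := by
    rw [hH]
    simp [Preadditive.sub_comp, e₁_fst, e₂_fst]
  have H_snd : H ≫ F.map biprod.snd = 0 := by
    rw [hH]
    simp [Preadditive.sub_comp, e₁_snd, e₂_snd]
  -- image-level facts
  have inl_π : F.map biprod.inl ≫ π = 0 := by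
    have : (F.map biprod.inl ≫ π) ≫ ι = 0 ≫ ι := by
      rw [Category.assoc, fac, inl_H, zero_comp]
    exact (cancel_mono ι).mp this
  have inr_π : F.map biprod.inr ≫ π = 0 := by
    have : (F.map biprod.inr ≫ π) ≫ ι = 0 ≫ ι := by
      rw [Category.assoc, fac, inr_H, zero_comp]
    exact (cancel_mono ι).mp this
  have ι_fst : ι ≫ F.map biprod.fst = 0 := by
    have : π ≫ (ι ≫ F.map biprod.fst) = π ≫ 0 := by
      rw [← Category.assoc, fac, H_fst, Limits.comp_zero]
    exact (cancel_epi π).mp this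
  have ι_snd : ι ≫ F.map biprod.snd = 0 := by
    have : π ≫ (ι ≫ F.map biprod.snd) = π ≫ 0 := by
      rw [← Category.assoc, fac, H_snd, Limits.comp_zero]
    exact (cancel_epi π).mp this
  have ι_e₁ : ι ≫ e₁ = 0 := by
    rw [he₁, F.map_comp, ← Category.assoc, ι_fst, zero_comp]
  have ι_e₂ : ι ≫ e₂ = 0 := by
    rw [he₂, F.map_comp, ← Category.assoc, ι_snd, zero_comp]
  have ι_π : ι ≫ π = 𝟙 (image H) := by
    have hιH : ι ≫ H = ι := by
      have := congrArg (fun t => ι ≫ t) hH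
      simp only [Preadditive.comp_sub, Category.comp_id, ι_e₁, ι_e₂, sub_zero] at this
      exact this
    have : (ι ≫ π) ≫ ι = 𝟙 _ ≫ ι := by
      rw [Category.assoc, fac, hιH, Category.id_comp]
    exact (cancel_mono ι).mp this
  -- construct the isomorphism
  refine ⟨⟨biprod.desc (F.map biprod.inl) (biprod.desc ι (F.map biprod.inr)),
    biprod.lift (F.map biprod.fst) (biprod.lift π (F.map biprod.snd)), ?_, ?_⟩⟩
  · apply biprod.hom_ext' <;> apply biprod.hom_ext <;>
      (try apply biprod.hom_ext') <;> (try apply biprod.hom_ext) <;>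
      simp [← F.map_comp, inl_π, inr_π, ι_fst, ι_snd, ι_π, hF.map_zero]
  · rw [biprod.lift_desc, biprod.lift_desc, fac, ← F.map_comp, ← F.map_comp,
      ← he₁, ← he₂, hH]
    abel
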